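/- Let the k-plane E vary over the skew Schubert cell E_{210,110} in G(3,7) with coordinates a,...,g, with rightmost entries c, e, g in its three rows, and let G_μ be the coordinate 4-plane spanned by e_1, e_2, e_3, e_6. Then the vanishing locus of det[E_{210,110}; G_μ] = c·e·g inside the cell decomposes as the union of the loci {c = 0} ∪ {g = 0} after row reduction; geometrically, Y_{210,110} ∩ Y_□G_μ = Y_{210,210} ∪ Y_{210,111}. -/

import Mathlib

/-- The "top" coordinate flag in ℂ⁷: F j is spanned by the last j standard basis vectors. -/
noncomputable def Ftop (j : ℕ) : Submodule ℂ (Fin 7 → ℂ) :=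
  Submodule.span ℂ ((fun t : Fin 7 => Pi.single t (1 : ℂ)) '' {t : Fin 7 | 7 - j ≤ (t : ℕ)})

/-- The "bottom" coordinate flag in ℂ⁷: F' j is spanned by the first j standard basis vectors. -/
noncomputable def Fbot (j : ℕ) : Submodule ℂ (Fin 7 → ℂ) :=
  Submodule.span ℂ ((fun t : Fin 7 => Pi.single t (1 : ℂ)) '' {t : Fin 7 | (t : ℕ) < j})

/-- The Schubert conditions (for G(3,7), so n−k = 4) for a partition λ and a flag F. -/
def SchubCond (F : ℕ → Submodule ℂ (Fin 7 → ℂ)) (lam : Fin 3 → ℕ)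
    (E : Submodule ℂ (Fin 7 → ℂ)) : Prop :=
  ∀ i : Fin 3, (i : ℕ) + 1 ≤ Module.finrank ℂ ↥(E ⊓ F (4 + ((i : ℕ) + 1) - lam i))

/-- The skew Schubert variety Y_{λ,μ} = Y_λF_• ∩ Y_μF'_• in G(3,7). -/
noncomputable def Yskew (lam mu : Fin 3 → ℕ) : Set (Submodule ℂ (Fin 7 → ℂ)) :=
  {E | Module.finrank ℂ E = 3 ∧ SchubCond Ftop lam E ∧ SchubCond Fbot mu E}

/-- The coordinate 4-plane G_μ = span{e₁, e₂, e₃, e₆} (1-based; 0-based {0,1,2,5}). -/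
noncomputable def Gmu : Submodule ℂ (Fin 7 → ℂ) :=
  Submodule.span ℂ ((fun t : Fin 7 => Pi.single t (1 : ℂ)) '' ({0, 1, 2, 5} : Set (Fin 7)))


open Module Submodule Set


noncomputable def K (S : Set (Fin 7)) : Submodule ℂ (Fin 7 → ℂ) where
  carrier := {x | ∀ i ∉ S, x i = 0}
  add_mem' := fun ha hb i hi => by simp [ha i hi, hb i hi]
  zero_mem' := fun i _ => rfl
  smul_mem' := fun c x hx i hi => by simp [hx i hi]

lemma mem_K {S : Set (Fin 7)} {x : Fin 7 → ℂ} : x ∈ K S ↔ ∀ i ∉ S, x i = 0 := Iff.rfl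

lemma K_mono {S T : Set (Fin 7)} (h : S ⊆ T) : K S ≤ K T :=
  fun x hx i hi => hx i (fun hs => hi (h hs))

lemma span_single_eq (S : Set (Fin 7)) :
    Submodule.span ℂ ((fun t : Fin 7 => Pi.single t (1 : ℂ)) '' S) = K S := by
  apply le_antisymm
  · rw [Submodule.span_le]
    rintro _ ⟨t, ht, rfl⟩ i hi
    have hne : i ≠ t := fun h => hi (h ▸ ht)
    simp [Pi.single_apply, hne]
  · intro x hx
    have hx2 : x = ∑ i : Fin 7, x i • (Pi.single i 1 : Fin 7 → ℂ) := by
      funext j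
      simp [Pi.single_apply, Finset.sum_apply]
    rw [hx2]
    refine Submodule.sum_mem _ fun i _ => ?_
    by_cases hi : i ∈ S
    · exact Submodule.smul_mem _ _ (Submodule.subset_span ⟨i, hi, rfl⟩)
    · rw [hx i hi]; simp

lemma single_injective : Function.Injective (fun t : Fin 7 => Pi.single t (1 : ℂ)) := by
  intro a b h
  by_contra hne
  have := congrFun h a
  simp [Pi.single_apply, Ne.symm hne] at this

lemma finrank_span_image (S : Finset (Fin 7)) :
    finrank ℂ ↥(Submodule.span ℂ ((fun t : Fin 7 => Pi.single t (1 : ℂ)) '' (S : Set (Fin 7)))) = S.card := by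
  classical
  rw [← Finset.coe_image]
  rw [finrank_span_finset_eq_card, Finset.card_image_of_injective _ single_injective]
  have li := (linearIndepOn_id_range_iff (Pi.basisFun ℂ (Fin 7)).injective).mpr (Pi.basisFun ℂ (Fin 7)).linearIndependent
  refine li.mono ?_
  intro x hx
  have hx' : x ∈ Finset.image (fun t : Fin 7 => Pi.single t (1:ℂ)) S := hx
  obtain ⟨t, _, rfl⟩ := Finset.mem_image.mp hx'
  exact ⟨t, by simp⟩


lemma Fbot_eq (j : ℕ) : Fbot j = K {t : Fin 7 | (t : ℕ) < j} := span_single_eq _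

lemma Gmu_eq : Gmu = K ({0, 1, 2, 5} : Set (Fin 7)) := span_single_eq _

lemma Fbot7 : Fbot 7 = ⊤ := by
  rw [Fbot_eq, eq_top_iff]
  intro x _ i hi
  exact absurd i.isLt hi

lemma finrank_Gmu : Module.finrank ℂ Gmu = 4 := by
  have h : ({0, 1, 2, 5} : Set (Fin 7)) = (({0, 1, 2, 5} : Finset (Fin 7)) : Set (Fin 7)) := by
    simp
  rw [Gmu, h, finrank_span_image]
  decide

lemma finrank_Fbot6 : Module.finrank ℂ (Fbot 6) = 6 := by
  have h : {t : Fin 7 | (t : ℕ) < 6} = (({0, 1, 2, 3, 4, 5} : Finset (Fin 7)) : Set (Fin 7)) := by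
    ext t; fin_cases t <;> simp <;> decide
  rw [Fbot, h, finrank_span_image]
  decide

lemma one_le_finrank_of_mem {p : Submodule ℂ (Fin 7 → ℂ)} {w : Fin 7 → ℂ}
    (hw : w ∈ p) (hw0 : w ≠ 0) : 1 ≤ Module.finrank ℂ p := by
  have h := Submodule.finrank_mono (Submodule.span_singleton_le_iff_mem w p |>.mpr hw)
  rwa [finrank_span_singleton hw0] at h

lemma exists_mem_ne_zero {p : Submodule ℂ (Fin 7 → ℂ)} (h : 1 ≤ Module.finrank ℂ p) :
    ∃ w ∈ p, w ≠ 0 := by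
  by_contra hc
  push_neg at hc
  have hb : p = ⊥ := eq_bot_iff.mpr fun x hx => (Submodule.mem_bot _).mpr (hc x hx)
  rw [hb, finrank_bot] at h
  omega


lemma part1 (a b c d e f g : ℂ) :
    1 ≤ finrank ℂ
          ↥(Submodule.span ℂ (Set.range
              (!![1, a, b, c, 0, 0, 0;
                  0, 0, 1, d, e, 0, 0;
                  0, 0, 0, 0, 1, f, g] : Matrix (Fin 3) (Fin 7) ℂ)) ⊓ Gmu)
        ↔ c * e * g = 0 := by
  set M : Matrix (Fin 3) (Fin 7) ℂ :=
    !![1, a, b, c, 0, 0, 0; 0, 0, 1, d, e, 0, 0; 0, 0, 0, 0, 1, f, g] with hM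
  constructor
  · intro h
    by_contra hne
    have hc : c ≠ 0 := fun h0 => hne (by rw [h0]; ring)
    have he : e ≠ 0 := fun h0 => hne (by rw [h0]; ring)
    have hg : g ≠ 0 := fun h0 => hne (by rw [h0]; ring)
    obtain ⟨w, ⟨hws, hwG⟩, hw0⟩ := exists_mem_ne_zero h
    obtain ⟨x, hx⟩ := (mem_span_range_iff_exists_fun ℂ).mp hws
    rw [Gmu_eq] at hwG
    have h3 := hwG 3 (by simp)
    have h4 := hwG 4 (by simp)
    have h6 := hwG 6 (by simp)
    rw [← hx] at h3 h4 h6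
    simp [Fin.sum_univ_three, hM] at h3 h4 h6
    replace h6 : x 2 * g = 0 := mul_eq_zero.mpr h6
    have hx2 : x 2 = 0 := by
      have h6' : x 2 * g = 0 := by linear_combination h6
      exact (mul_eq_zero.mp h6').resolve_right hg
    have hx1 : x 1 = 0 := by
      have h4' : x 1 * e = 0 := by linear_combination h4 - hx2
      exact (mul_eq_zero.mp h4').resolve_right he
    have hx0 : x 0 = 0 := by
      have h3' : x 0 * c = 0 := by linear_combination h3 - d * hx1
      exact (mul_eq_zero.mp h3').resolve_right hc
    exact hw0 (by rw [← hx]; simp [hx0, hx1, hx2, Fin.sum_univ_three])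
  · intro h
    have coord : ∀ (y : Fin 3 → ℂ) (j : Fin 7),
        (∑ i, y i • M i) j = y 0 * M 0 j + y 1 * M 1 j + y 2 * M 2 j := by
      intro y j
      simp [Fin.sum_univ_three]
    have key : ∀ y : Fin 3 → ℂ, y 0 * c + y 1 * d = 0 → y 1 * e + y 2 = 0 →
        y 2 * g = 0 → (∑ i, y i • M i) ≠ 0 →
        1 ≤ finrank ℂ ↥(Submodule.span ℂ (Set.range M) ⊓ Gmu) := by
      intro y h3 h4 h6 hne
      refine one_le_finrank_of_mem (p := Submodule.span ℂ (Set.range M) ⊓ Gmu) ?_ hne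
      refine Submodule.mem_inf.mpr ⟨(mem_span_range_iff_exists_fun ℂ).mpr ⟨y, rfl⟩, ?_⟩
      rw [Gmu_eq]
      intro i hi
      simp only [Set.mem_insert_iff, Set.mem_singleton_iff, not_or] at hi
      obtain ⟨n0, n1, n2, n5⟩ := hi
      fin_cases i
      · exact absurd rfl n0
      · exact absurd rfl n1
      · exact absurd rfl n2
      · rw [coord]
        show y 0 * c + y 1 * d + y 2 * 0 = 0
        linear_combination h3
      · rw [coord]
        show y 0 * 0 + y 1 * e + y 2 * 1 = 0
        linear_combination h4
      · exact absurd rfl n5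
      · rw [coord]
        show y 0 * 0 + y 1 * 0 + y 2 * g = 0
        linear_combination h6
    have nz : ∀ y : Fin 3 → ℂ, y 1 = -c → c ≠ 0 → (∑ i, y i • M i) ≠ 0 := by
      intro y hy1 hc h0
      have h0' := congrFun h0 0
      have h2' := congrFun h0 2
      rw [coord] at h0' h2'
      have e0 : y 0 * 1 + y 1 * 0 + y 2 * 0 = 0 := h0'
      have e2 : y 0 * b + y 1 * 1 + y 2 * 0 = 0 := h2'
      apply hc
      have hy0 : y 0 = 0 := by linear_combination e0
      linear_combination -e2 + b * hy0 + hy1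
    by_cases hc : c = 0
    · refine key ![1, 0, 0] ?_ ?_ ?_ ?_
      · show 1 * c + 0 * d = 0
        rw [hc]; ring
      · show (0:ℂ) * e + 0 = 0
        ring
      · show (0:ℂ) * g = 0
        ring
      · intro h0
        have h0' := congrFun h0 0
        rw [coord] at h0'
        have e0 : (1:ℂ) * 1 + 0 * 0 + 0 * 0 = 0 := h0'
        norm_num at e0
    · by_cases he : e = 0
      · refine key ![d, -c, 0] ?_ ?_ ?_ (nz _ rfl hc)
        · show d * c + -c * d = 0
          ring
        · show -c * e + 0 = 0
          rw [he]; ring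
        · show (0:ℂ) * g = 0
          ring
      · have hg : g = 0 := by
          rcases mul_eq_zero.mp h with h' | h'
          · rcases mul_eq_zero.mp h' with h'' | h''
            · exact absurd h'' hc
            · exact absurd h'' he
          · exact h'
        refine key ![d, -c, c * e] ?_ ?_ ?_ (nz _ rfl hc)
        · show d * c + -c * d = 0
          ring
        · show -c * e + c * e = 0
          ring
        · show c * e * g = 0
          rw [hg]; ring

lemma schub_explicit (m0 m1 m2 n0 n1 n2 : ℕ) (e0 : 5 - m0 = n0) (e1 : 6 - m1 = n1)
    (e2 : 7 - m2 = n2) (E : Submodule ℂ (Fin 7 → ℂ)) :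
    SchubCond Fbot ![m0, m1, m2] E ↔
      (1 ≤ Module.finrank ℂ ↥(E ⊓ Fbot n0) ∧ 2 ≤ Module.finrank ℂ ↥(E ⊓ Fbot n1) ∧
        3 ≤ Module.finrank ℂ ↥(E ⊓ Fbot n2)) := by
  subst e0 e1 e2
  constructor
  · intro h
    exact ⟨h 0, h 1, h 2⟩
  · rintro ⟨h0, h1, h2⟩ i
    fin_cases i
    · exact h0
    · exact h1
    · exact h2

lemma schub110 (E : Submodule ℂ (Fin 7 → ℂ)) :
    SchubCond Fbot ![1, 1, 0] E ↔
      (1 ≤ Module.finrank ℂ ↥(E ⊓ Fbot 4) ∧ 2 ≤ Module.finrank ℂ ↥(E ⊓ Fbot 5) ∧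
        3 ≤ Module.finrank ℂ ↥(E ⊓ Fbot 7)) := schub_explicit 1 1 0 4 5 7 rfl rfl rfl E

lemma schub210 (E : Submodule ℂ (Fin 7 → ℂ)) :
    SchubCond Fbot ![2, 1, 0] E ↔
      (1 ≤ Module.finrank ℂ ↥(E ⊓ Fbot 3) ∧ 2 ≤ Module.finrank ℂ ↥(E ⊓ Fbot 5) ∧
        3 ≤ Module.finrank ℂ ↥(E ⊓ Fbot 7)) := schub_explicit 2 1 0 3 5 7 rfl rfl rfl E

lemma schub111 (E : Submodule ℂ (Fin 7 → ℂ)) :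
    SchubCond Fbot ![1, 1, 1] E ↔
      (1 ≤ Module.finrank ℂ ↥(E ⊓ Fbot 4) ∧ 2 ≤ Module.finrank ℂ ↥(E ⊓ Fbot 5) ∧
        3 ≤ Module.finrank ℂ ↥(E ⊓ Fbot 6)) := schub_explicit 1 1 1 4 5 6 rfl rfl rfl E

lemma part2 : Yskew ![2, 1, 0] ![1, 1, 0] ∩ {E | 1 ≤ Module.finrank ℂ ↥(E ⊓ Gmu)}
    = Yskew ![2, 1, 0] ![2, 1, 0] ∪ Yskew ![2, 1, 0] ![1, 1, 1] := by
  ext E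
  simp only [Set.mem_inter_iff, Set.mem_union, Set.mem_setOf_eq, Yskew]
  constructor
  · rintro ⟨⟨hdim, hlam, hmu⟩, hG⟩
    obtain ⟨h4, h5, h7⟩ := (schub110 E).mp hmu
    obtain ⟨w, hw, hw0⟩ := exists_mem_ne_zero hG
    have hwE := (Submodule.mem_inf.mp hw).1
    have hwG := (Submodule.mem_inf.mp hw).2
    rw [Gmu_eq] at hwG
    by_cases h5w : w 5 = 0
    · left
      refine ⟨hdim, hlam, (schub210 E).mpr ⟨?_, h5, h7⟩⟩
      refine one_le_finrank_of_mem (w := w) (Submodule.mem_inf.mpr ⟨hwE, ?_⟩) hw0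
      rw [Fbot_eq]
      intro i hi
      simp only [Set.mem_setOf_eq, not_lt] at hi
      fin_cases i
      · simp at hi
      · simp at hi
      · simp at hi
      · exact hwG 3 (by simp)
      · exact hwG 4 (by simp)
      · exact h5w
      · exact hwG 6 (by simp)
    · right
      refine ⟨hdim, hlam, (schub111 E).mpr ⟨h4, h5, ?_⟩⟩
      have hwB5 : w ∉ Fbot 5 := by
        rw [Fbot_eq]
        intro hmem
        exact h5w (hmem 5 (by simp [Set.mem_setOf_eq, show ((5 : Fin 7) : ℕ) = 5 from rfl]))
      have hdisj : Submodule.span ℂ {w} ⊓ (E ⊓ Fbot 5) = ⊥ := by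
        rw [eq_bot_iff]
        rintro u hu
        obtain ⟨t, rfl⟩ := Submodule.mem_span_singleton.mp hu.1
        rcases eq_or_ne t 0 with rfl | ht
        · simp
        · exact absurd (by simpa [ht] using (E ⊓ Fbot 5).smul_mem t⁻¹ hu.2 : w ∈ E ⊓ Fbot 5).2 hwB5
      have hsub : Submodule.span ℂ {w} ⊔ (E ⊓ Fbot 5) ≤ E :=
        sup_le ((Submodule.span_singleton_le_iff_mem w E).mpr hwE) inf_le_left
      have hrank := Submodule.finrank_sup_add_finrank_inf_eq (Submodule.span ℂ {w}) (E ⊓ Fbot 5)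
      rw [hdisj, finrank_bot, finrank_span_singleton hw0] at hrank
      have hEeq : Submodule.span ℂ {w} ⊔ (E ⊓ Fbot 5) = E :=
        Submodule.eq_of_le_of_finrank_le hsub (by rw [hdim]; omega)
      have hE6 : E ≤ Fbot 6 := by
        rw [← hEeq]
        apply sup_le
        · rw [Submodule.span_singleton_le_iff_mem, Fbot_eq]
          intro i hi
          simp only [Set.mem_setOf_eq, not_lt] at hi
          fin_cases i
          · simp at hi
          · simp at hi
          · simp at hi
          · simp at hi
          · simp at hi
          · simp at hi
          · exact hwG 6 (by simp)
        · exact inf_le_right.trans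
            (by rw [Fbot_eq, Fbot_eq]; exact K_mono fun t ht => Nat.lt_succ_of_lt ht)
      rw [inf_eq_left.mpr hE6, hdim]
  · rintro (⟨hdim, hlam, hmu⟩ | ⟨hdim, hlam, hmu⟩)
    · obtain ⟨h3, h5, h7⟩ := (schub210 E).mp hmu
      have hsub : E ⊓ Fbot 3 ≤ E ⊓ Gmu := by
        refine inf_le_inf_left E ?_
        rw [Fbot_eq, Gmu_eq]
        refine K_mono fun t ht => ?_
        fin_cases t
        · exact Set.mem_insert _ _
        · exact Set.mem_insert_of_mem _ (Set.mem_insert _ _)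
        · exact Set.mem_insert_of_mem _ (Set.mem_insert_of_mem _ (Set.mem_insert _ _))
        all_goals (exfalso; revert ht; simp [Set.mem_setOf_eq])
      have hsub4 : E ⊓ Fbot 3 ≤ E ⊓ Fbot 4 := by
        refine inf_le_inf_left E ?_
        rw [Fbot_eq, Fbot_eq]
        exact K_mono fun t ht => Nat.lt_succ_of_lt ht
      exact ⟨⟨hdim, hlam, (schub110 E).mpr
          ⟨le_trans h3 (Submodule.finrank_mono hsub4), h5, h7⟩⟩,
        le_trans h3 (Submodule.finrank_mono hsub)⟩
    · obtain ⟨h4, h5, h6⟩ := (schub111 E).mp hmu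
      have hE6eq : E ⊓ Fbot 6 = E :=
        Submodule.eq_of_le_of_finrank_le inf_le_left (by rw [hdim]; exact h6)
      have hE6 : E ≤ Fbot 6 := hE6eq ▸ inf_le_right
      have hG6 : Gmu ≤ Fbot 6 := by
        rw [Gmu_eq, Fbot_eq]
        refine K_mono fun t ht => ?_
        simp only [Set.mem_insert_iff, Set.mem_singleton_iff] at ht
        rcases ht with rfl | rfl | rfl | rfl <;> simp [Set.mem_setOf_eq] <;> decide
      have hsum := Submodule.finrank_sup_add_finrank_inf_eq E Gmu
      have hle : finrank ℂ ↥(E ⊔ Gmu) ≤ 6 :=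
        finrank_Fbot6 ▸ Submodule.finrank_mono (sup_le hE6 hG6)
      rw [hdim, finrank_Gmu] at hsum
      refine ⟨⟨hdim, hlam, (schub110 E).mpr ⟨h4, h5, ?_⟩⟩, by omega⟩
      rw [Fbot7, inf_top_eq, hdim]

/-- On the skew Schubert cell E_{210,110} in G(3,7) with coordinates a,…,g, the condition
of meeting G_μ = span{e₁,e₂,e₃,e₆} nontrivially is the vanishing of det[E;G_μ] = c·e·g;
geometrically, Y_{210,110} ∩ Y_□G_μ = Y_{210,210} ∪ Y_{210,111}. -/
theorem pieri_degeneration_G37 :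
    (∀ a b c d e f g : ℂ,
      1 ≤ Module.finrank ℂ
          ↥(Submodule.span ℂ (Set.range
              (!![1, a, b, c, 0, 0, 0;
                  0, 0, 1, d, e, 0, 0;
                  0, 0, 0, 0, 1, f, g] : Matrix (Fin 3) (Fin 7) ℂ)) ⊓ Gmu)
        ↔ c * e * g = 0) ∧
    Yskew ![2, 1, 0] ![1, 1, 0] ∩ {E | 1 ≤ Module.finrank ℂ ↥(E ⊓ Gmu)}
      = Yskew ![2, 1, 0] ![2, 1, 0] ∪ Yskew ![2, 1, 0] ![1, 1, 1] := by
  exact ⟨part1, part2⟩
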